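/- Decay of the x-derivative of θ: there exists c > 0 such that for all x > 0 and v ∈ [a,b] ⊂ (1/α,1), |(x-1)_+^{v-1/α} - 2(x-1/2)_+^{v-1/α} + x_+^{v-1/α}| ≤ c (1+x)^{v-1/α-2}; moreover this quantity is 0 for x ≤ 0. -/

import Mathlib

noncomputable def posPow (s κ : ℝ) : ℝ := if 0 < s then s ^ κ else 0

lemma posPow_nonneg (s κ : ℝ) : 0 ≤ posPow s κ := by
  unfold posPow
  split
  · exact Real.rpow_nonneg (le_of_lt (by assumption)) _
  · exact le_refl 0

lemma posPow_le_two {s κ : ℝ} (hκ0 : 0 < κ) (hκ1 : κ ≤ 1) (hs : s ≤ 2) : posPow s κ ≤ 2 := by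
  unfold posPow
  split
  · rename_i h
    rcases le_or_gt s 1 with h1 | h1
    · calc s ^ κ ≤ 1 := Real.rpow_le_one h.le h1 hκ0.le
        _ ≤ 2 := by norm_num
    · calc s ^ κ ≤ s ^ (1:ℝ) := Real.rpow_le_rpow_of_exponent_le h1.le hκ1
        _ = s := Real.rpow_one s
        _ ≤ 2 := hs
  · norm_num

lemma hasDerivAt_shift_rpow (κ c y : ℝ) (hy : 0 < y - c) :
    HasDerivAt (fun z : ℝ => (z - c) ^ κ) (κ * (y - c) ^ (κ - 1)) y := by
  have h := (Real.hasDerivAt_rpow_const (x := y - c) (p := κ)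
    (Or.inl (ne_of_gt hy))).comp y ((hasDerivAt_id y).sub_const c)
  simpa [Function.comp_def] using h

lemma three_rpow_lb {z : ℝ} (hz : -2 ≤ z) : (1/9 : ℝ) ≤ (3:ℝ) ^ z := by
  have h1 : (3:ℝ) ^ (-2:ℝ) ≤ (3:ℝ) ^ z :=
    Real.rpow_le_rpow_of_exponent_le (by norm_num) hz
  have h2 : (3:ℝ) ^ (-2:ℝ) = 1/9 := by
    rw [show (-2:ℝ) = ((-2:ℤ):ℝ) by norm_num, Real.rpow_intCast]
    norm_num
  rw [← h2]
  exact h1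

set_option maxHeartbeats 1600000 in
theorem stmt16 (α a b : ℝ) (hα : 1 < α ∧ α < 2) (hab : 1/α < a ∧ a < b ∧ b < 1) :
    (∃ c : ℝ, 0 < c ∧ ∀ x v : ℝ, 0 < x → v ∈ Set.Icc a b →
      |posPow (x - 1) (v - 1/α) - 2 * posPow (x - 1/2) (v - 1/α) + posPow x (v - 1/α)|
        ≤ c * (1 + x) ^ (v - 1/α - 2)) ∧
    (∀ x v : ℝ, x ≤ 0 → v ∈ Set.Icc a b →
      posPow (x - 1) (v - 1/α) - 2 * posPow (x - 1/2) (v - 1/α) + posPow x (v - 1/α) = 0) := by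
  obtain ⟨hα1, hα2⟩ := hα
  obtain ⟨ha, hab', hb1⟩ := hab
  have hαpos : (0:ℝ) < α := by linarith
  have hinv : (0:ℝ) < 1/α := by positivity
  constructor
  · refine ⟨72, by norm_num, ?_⟩
    intro x v hx hv
    set κ := v - 1/α with hκdef
    clear_value κ
    have hκ0 : 0 < κ := by
      have : 1/α < v := lt_of_lt_of_le ha hv.1
      rw [hκdef]; linarith
    have hκ1 : κ < 1 := by
      have : v < 1 := lt_of_le_of_lt hv.2 hb1
      rw [hκdef]; linarith
    have hxpos1 : (0:ℝ) < 1 + x := by linarith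
    have hppos : 0 < (1 + x) ^ (κ - 2) := Real.rpow_pos_of_pos hxpos1 _
    rcases le_or_gt x 2 with hx2 | hx2
    · -- small x : crude bound
      have hA : posPow (x - 1) κ ≤ 2 := posPow_le_two hκ0 hκ1.le (by linarith)
      have hB : posPow (x - 1/2) κ ≤ 2 := posPow_le_two hκ0 hκ1.le (by linarith)
      have hC : posPow x κ ≤ 2 := posPow_le_two hκ0 hκ1.le (by linarith)
      have hA0 := posPow_nonneg (x - 1) κ
      have hB0 := posPow_nonneg (x - 1/2) κ
      have hC0 := posPow_nonneg x κ
      have habs : |posPow (x - 1) κ - 2 * posPow (x - 1/2) κ + posPow x κ| ≤ 4 := by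
        rw [abs_le]; constructor <;> linarith
      have h39 : (3:ℝ) ^ (κ - 2) ≤ (1 + x) ^ (κ - 2) :=
        Real.rpow_le_rpow_of_nonpos hxpos1 (by linarith) (by linarith)
      have hlb : (1/9 : ℝ) ≤ (3:ℝ) ^ (κ - 2) := three_rpow_lb (by linarith)
      calc |posPow (x - 1) κ - 2 * posPow (x - 1/2) κ + posPow x κ| ≤ 4 := habs
        _ ≤ 72 * (1 + x) ^ (κ - 2) := by linarith
    · -- x > 2 : mean value theorem twice
      have hx1 : (1:ℝ) < x - 1 := by linarith
      have hE : posPow (x - 1) κ - 2 * posPow (x - 1/2) κ + posPow x κ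
          = (x - 1) ^ κ - 2 * (x - 1/2) ^ κ + x ^ κ := by
        unfold posPow
        rw [if_pos (by linarith : (0:ℝ) < x - 1), if_pos (by linarith : (0:ℝ) < x - 1/2),
          if_pos hx]
      -- first MVT on h(y) = y^κ - (y - 1/2)^κ over [x - 1/2, x]
      have hmvt1 := exists_hasDerivAt_eq_slope
        (f := fun y : ℝ => y ^ κ - (y - 1/2) ^ κ)
        (f' := fun y : ℝ => κ * y ^ (κ - 1) - κ * (y - 1/2) ^ (κ - 1))
        (a := x - 1/2) (b := x) (by linarith)
        (fun y hy => by
          have hy1 : x - 1/2 ≤ y := hy.1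
          have hy2 : (0:ℝ) < y - 1/2 := by linarith
          exact ((Real.hasDerivAt_rpow_const (x := y) (p := κ)
            (Or.inl (ne_of_gt (by linarith : (0:ℝ) < y)))).sub
            (hasDerivAt_shift_rpow κ (1/2) y hy2)).continuousAt.continuousWithinAt)
        (fun y hy => by
          have hy1 : x - 1/2 < y := hy.1
          have hy2 : (0:ℝ) < y - 1/2 := by linarith
          exact (Real.hasDerivAt_rpow_const (x := y) (p := κ)
            (Or.inl (ne_of_gt (by linarith : (0:ℝ) < y)))).sub
            (hasDerivAt_shift_rpow κ (1/2) y hy2))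
      obtain ⟨ξ, hξmem, hξ⟩ := hmvt1
      have hξ1 : x - 1/2 < ξ := hξmem.1
      have hξ2 : ξ < x := hξmem.2
      have hξp : 1 < ξ - 1/2 := by linarith
      -- second MVT on p(y) = y^(κ-1) over [ξ - 1/2, ξ]
      have hmvt2 := exists_hasDerivAt_eq_slope
        (f := fun y : ℝ => y ^ (κ - 1))
        (f' := fun y : ℝ => (κ - 1) * y ^ (κ - 1 - 1))
        (a := ξ - 1/2) (b := ξ) (by linarith)
        (fun y hy => by
          have hy1 : ξ - 1/2 ≤ y := hy.1
          exact (Real.hasDerivAt_rpow_const (x := y) (p := κ - 1)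
            (Or.inl (ne_of_gt (by linarith : (0:ℝ) < y)))).continuousAt.continuousWithinAt)
        (fun y hy => by
          have hy1 : ξ - 1/2 < y := hy.1
          exact Real.hasDerivAt_rpow_const (Or.inl (ne_of_gt (by linarith : (0:ℝ) < y))))
      obtain ⟨η, hηmem, hη⟩ := hmvt2
      have hη1 : ξ - 1/2 < η := hηmem.1
      have hη2 : η < ξ := hηmem.2
      have hηgt : x - 1 < η := by linarith
      have hη0 : (0:ℝ) < η := by linarith
      -- combine
      have hstep1 : x - (x - 1/2) = (1/2 : ℝ) := by ring
      have hstep2 : ξ - (ξ - 1/2) = (1/2 : ℝ) := by ring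
      rw [hstep1] at hξ
      rw [hstep2] at hη
      have hval : (x - 1) ^ κ - 2 * (x - 1/2) ^ κ + x ^ κ
          = κ * (κ - 1) / 4 * η ^ (κ - 2) := by
        have e1 : x ^ κ - (x - 1/2) ^ κ - ((x - 1/2) ^ κ - (x - 1/2 - 1/2) ^ κ)
            = (1/2) * (κ * ξ ^ (κ - 1) - κ * (ξ - 1/2) ^ (κ - 1)) := by
          have := hξ
          field_simp at this
          linarith
        have e2 : ξ ^ (κ - 1) - (ξ - 1/2) ^ (κ - 1)
            = (1/2) * ((κ - 1) * η ^ (κ - 1 - 1)) := by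
          have := hη
          field_simp at this
          linarith
        have hxh : x - 1/2 - 1/2 = x - 1 := by ring
        rw [hxh] at e1
        have hexp : κ - 1 - 1 = κ - 2 := by ring
        rw [hexp] at e2
        linear_combination e1 + (κ/2) * e2
      rw [hE, hval]
      have hηp : 0 < η ^ (κ - 2) := Real.rpow_pos_of_pos hη0 _
      have habs : |κ * (κ - 1) / 4 * η ^ (κ - 2)| = κ * (1 - κ) / 4 * η ^ (κ - 2) := by
        rw [abs_mul, abs_of_pos hηp, abs_of_neg
          (div_neg_of_neg_of_pos (mul_neg_of_pos_of_neg hκ0 (by linarith)) (by norm_num))]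
        ring
      rw [habs]
      have b2 : η ^ (κ - 2) ≤ (x - 1) ^ (κ - 2) :=
        Real.rpow_le_rpow_of_nonpos (by linarith : (0:ℝ) < x - 1) hηgt.le (by linarith)
      have b3 : (1 + x) / 3 ≤ x - 1 := by linarith
      have b4 : (x - 1) ^ (κ - 2) ≤ ((1 + x) / 3) ^ (κ - 2) :=
        Real.rpow_le_rpow_of_nonpos (by positivity) b3 (by linarith)
      have b5 : ((1 + x) / 3) ^ (κ - 2) = (1 + x) ^ (κ - 2) / (3:ℝ) ^ (κ - 2) :=
        Real.div_rpow (by linarith) (by norm_num) _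
      have h39 : (1/9 : ℝ) ≤ (3:ℝ) ^ (κ - 2) := three_rpow_lb (by linarith)
      have h3p : (0:ℝ) < (3:ℝ) ^ (κ - 2) := Real.rpow_pos_of_pos (by norm_num) _
      have b6 : (1 + x) ^ (κ - 2) / (3:ℝ) ^ (κ - 2) ≤ 9 * (1 + x) ^ (κ - 2) := by
        rw [div_le_iff₀ h3p]
        have h9 := mul_le_mul_of_nonneg_left h39 hppos.le
        linarith [h9]
      have bcoef : κ * (1 - κ) / 4 ≤ 1 := by
        have h1 : κ * (1 - κ) ≤ 1 * 1 :=
          mul_le_mul (by linarith) (by linarith) (by linarith) (by norm_num)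
        linarith
      calc κ * (1 - κ) / 4 * η ^ (κ - 2) ≤ 1 * η ^ (κ - 2) :=
            mul_le_mul_of_nonneg_right bcoef hηp.le
        _ = η ^ (κ - 2) := one_mul _
        _ ≤ (x - 1) ^ (κ - 2) := b2
        _ ≤ ((1 + x) / 3) ^ (κ - 2) := b4
        _ = (1 + x) ^ (κ - 2) / (3:ℝ) ^ (κ - 2) := b5
        _ ≤ 9 * (1 + x) ^ (κ - 2) := b6
        _ ≤ 72 * (1 + x) ^ (κ - 2) := by linarith
  · intro x v hxle hv
    have h1 : ¬ (0:ℝ) < x - 1 := by linarith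
    have h2 : ¬ (0:ℝ) < x - 1/2 := by linarith
    have h3 : ¬ (0:ℝ) < x := by linarith
    unfold posPow
    rw [if_neg h1, if_neg h2, if_neg h3]
    ring
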